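/- If X₀ = F(X₁) = G(X₂) for deterministic functions F, G and X₁₂ = R(X₁, X₂) for a deterministic function R, then H(X₁₂) + H(X₀) ≤ H(X₁) + H(X₂), where H denotes Shannon entropy of random variables taking finitely many values. -/

import Mathlib

open scoped BigOperators

/-- Probability that the random variable `X` takes the value `a`, for a probability
mass function `p` on a finite sample space `Ω`. -/
noncomputable def pOf {Ω α : Type*} [Fintype Ω] [DecidableEq α]
    (p : Ω → ℝ) (X : Ω → α) (a : α) : ℝ :=
  ∑ ω ∈ Finset.univ.filter (fun ω => X ω = a), p ω

/-- Shannon entropy (natural units) of a random variable `X` with finitely many values,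
defined on a finite probability space with mass function `p`. -/
noncomputable def Hent {Ω α : Type*} [Fintype Ω] [Fintype α] [DecidableEq α]
    (p : Ω → ℝ) (X : Ω → α) : ℝ :=
  ∑ a : α, Real.negMulLog (pOf p X a)

lemma pOf_nonneg {Ω α : Type*} [Fintype Ω] [DecidableEq α]
    (p : Ω → ℝ) (hp0 : ∀ ω, 0 ≤ p ω) (X : Ω → α) (a : α) : 0 ≤ pOf p X a :=
  Finset.sum_nonneg fun ω _ => hp0 ω

lemma sum_pOf {Ω α : Type*} [Fintype Ω] [Fintype α] [DecidableEq α]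
    (p : Ω → ℝ) (X : Ω → α) : ∑ a : α, pOf p X a = ∑ ω, p ω := by
  classical
  unfold pOf
  exact Finset.sum_fiberwise Finset.univ X p

lemma pOf_comp {Ω α β : Type*} [Fintype Ω] [Fintype α] [DecidableEq α] [DecidableEq β]
    (p : Ω → ℝ) (X : Ω → α) (f : α → β) (b : β) :
    pOf p (fun ω => f (X ω)) b
      = ∑ a ∈ Finset.univ.filter (fun a => f a = b), pOf p X a := by
  classical
  unfold pOf
  symm
  calc ∑ a ∈ Finset.univ.filter (fun a => f a = b),
        ∑ ω ∈ Finset.univ.filter (fun ω => X ω = a), p ω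
      = ∑ a : α, ∑ ω : Ω, if X ω = a ∧ f a = b then p ω else 0 := by
        rw [Finset.sum_filter]
        refine Finset.sum_congr rfl fun a _ => ?_
        by_cases h : f a = b
        · simp [h, Finset.sum_filter]
        · simp [h]
    _ = ∑ ω : Ω, ∑ a : α, if X ω = a ∧ f a = b then p ω else 0 := Finset.sum_comm
    _ = ∑ ω ∈ Finset.univ.filter (fun ω => f (X ω) = b), p ω := by
        rw [Finset.sum_filter]
        refine Finset.sum_congr rfl fun ω _ => ?_
        rw [show (fun a => if X ω = a ∧ f a = b then p ω else 0)
            = fun a => if X ω = a then (if f a = b then p ω else 0) else 0 from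
          funext fun a => by by_cases h1 : X ω = a <;> simp [h1]]
        rw [Finset.sum_ite_eq Finset.univ (X ω) (fun a => if f a = b then p ω else 0)]
        simp

/-- Superadditivity of `negMulLog` on nonnegative reals. -/
lemma negMulLog_sum_le {ι : Type*} (s : Finset ι) (x : ι → ℝ) (hx : ∀ i ∈ s, 0 ≤ x i) :
    Real.negMulLog (∑ i ∈ s, x i) ≤ ∑ i ∈ s, Real.negMulLog (x i) := by
  classical
  have h1 : Real.negMulLog (∑ i ∈ s, x i)
      = ∑ i ∈ s, (-(x i) * Real.log (∑ j ∈ s, x j)) := by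
    rw [Real.negMulLog, show -(∑ i ∈ s, x i) = ∑ i ∈ s, -(x i) from (Finset.sum_neg_distrib _).symm,
      Finset.sum_mul]
  rw [h1]
  refine Finset.sum_le_sum fun i hi => ?_
  rcases eq_or_lt_of_le (hx i hi) with h0 | h0
  · simp [← h0]
  · have hle : x i ≤ ∑ j ∈ s, x j := Finset.single_le_sum hx hi
    have hlog : Real.log (x i) ≤ Real.log (∑ j ∈ s, x j) := Real.log_le_log h0 hle
    rw [Real.negMulLog]
    nlinarith [hlog, h0]

/-- Entropy decreases under a deterministic map. -/
lemma Hent_comp_le {Ω α β : Type*} [Fintype Ω] [Fintype α] [DecidableEq α]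
    [Fintype β] [DecidableEq β]
    (p : Ω → ℝ) (hp0 : ∀ ω, 0 ≤ p ω) (X : Ω → α) (f : α → β) :
    Hent p (fun ω => f (X ω)) ≤ Hent p X := by
  classical
  unfold Hent
  calc ∑ b : β, Real.negMulLog (pOf p (fun ω => f (X ω)) b)
      ≤ ∑ b : β, ∑ a ∈ Finset.univ.filter (fun a => f a = b),
          Real.negMulLog (pOf p X a) := by
        refine Finset.sum_le_sum fun b _ => ?_
        rw [pOf_comp p X f b]
        exact negMulLog_sum_le _ _ fun a _ => pOf_nonneg p hp0 X a
    _ = ∑ a : α, Real.negMulLog (pOf p X a) :=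
        Finset.sum_fiberwise Finset.univ f _

/-- Functional submodularity of Shannon entropy.
If `X₀ = F(X₁) = G(X₂)` and `X₁₂ = R(X₁, X₂)` then
`H(X₁₂) + H(X₀) ≤ H(X₁) + H(X₂)`. -/
theorem functional_submodularity
    {Ω α₁ α₂ α₀ α₁₂ : Type*} [Fintype Ω]
    [Fintype α₁] [DecidableEq α₁] [Fintype α₂] [DecidableEq α₂]
    [Fintype α₀] [DecidableEq α₀] [Fintype α₁₂] [DecidableEq α₁₂]
    (p : Ω → ℝ) (hp0 : ∀ ω, 0 ≤ p ω) (hp1 : ∑ ω, p ω = 1)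
    (X₁ : Ω → α₁) (X₂ : Ω → α₂) (X₀ : Ω → α₀) (X₁₂ : Ω → α₁₂)
    (F : α₁ → α₀) (G : α₂ → α₀) (R : α₁ × α₂ → α₁₂)
    (hF : ∀ ω, X₀ ω = F (X₁ ω)) (hG : ∀ ω, X₀ ω = G (X₂ ω))
    (hR : ∀ ω, X₁₂ ω = R (X₁ ω, X₂ ω)) :
    Hent p X₁₂ + Hent p X₀ ≤ Hent p X₁ + Hent p X₂ := by
  classical
  set Y : Ω → α₁ × α₂ := fun ω => (X₁ ω, X₂ ω) with hYdef
  -- step 1 : X₁₂ is a function of Y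
  have h12 : Hent p X₁₂ ≤ Hent p Y := by
    have : X₁₂ = fun ω => R (Y ω) := funext fun ω => hR ω
    rw [this]
    exact Hent_comp_le p hp0 Y R
  -- abbreviations
  set P : α₁ × α₂ → ℝ := pOf p Y with hPdef
  set q1 : α₁ → ℝ := pOf p X₁ with hq1def
  set q2 : α₂ → ℝ := pOf p X₂ with hq2def
  set q0 : α₀ → ℝ := pOf p X₀ with hq0def
  have hPnn : ∀ x, 0 ≤ P x := fun x => pOf_nonneg p hp0 Y x
  -- marginals
  have hq1 : ∀ a, q1 a = ∑ x ∈ Finset.univ.filter (fun x : α₁ × α₂ => x.1 = a), P x := by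
    intro a
    have hX : X₁ = fun ω => (Y ω).1 := rfl
    rw [hq1def, hX, pOf_comp p Y Prod.fst a, ← hPdef]
  have hq2 : ∀ b, q2 b = ∑ x ∈ Finset.univ.filter (fun x : α₁ × α₂ => x.2 = b), P x := by
    intro b
    have hX : X₂ = fun ω => (Y ω).2 := rfl
    rw [hq2def, hX, pOf_comp p Y Prod.snd b, ← hPdef]
  have hq0Y : ∀ z, q0 z = ∑ x ∈ Finset.univ.filter (fun x : α₁ × α₂ => F x.1 = z), P x := by
    intro z
    have hX : X₀ = fun ω => F ((Y ω).1) := funext fun ω => hF ω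
    rw [hq0def, hX, pOf_comp p Y (fun x => F x.1) z, ← hPdef]
  have hq0F : ∀ z, q0 z = ∑ a ∈ Finset.univ.filter (fun a => F a = z), q1 a := by
    intro z
    have hX : X₀ = fun ω => F (X₁ ω) := funext fun ω => hF ω
    rw [hq0def, hX, pOf_comp p X₁ F z, ← hq1def]
  have hq0G : ∀ z, q0 z = ∑ b ∈ Finset.univ.filter (fun b => G b = z), q2 b := by
    intro z
    have hX : X₀ = fun ω => G (X₂ ω) := funext fun ω => hG ω
    rw [hq0def, hX, pOf_comp p X₂ G z, ← hq2def]
  have hPsum : ∑ x : α₁ × α₂, P x = 1 := by rw [hPdef, sum_pOf, hp1]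
  -- rewrite entropies as sums over pairs
  have e1 : Hent p X₁ = ∑ x : α₁ × α₂, (-(P x) * Real.log (q1 x.1)) := by
    rw [show Hent p X₁ = ∑ a : α₁, Real.negMulLog (q1 a) from rfl,
      ← Finset.sum_fiberwise Finset.univ Prod.fst
        (fun x : α₁ × α₂ => -(P x) * Real.log (q1 x.1))]
    refine Finset.sum_congr rfl fun a _ => ?_
    have h : ∑ x ∈ Finset.univ.filter (fun x : α₁ × α₂ => x.1 = a),
        (-(P x) * Real.log (q1 x.1))
        = ∑ x ∈ Finset.univ.filter (fun x : α₁ × α₂ => x.1 = a),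
        (-(P x) * Real.log (q1 a)) := by
      refine Finset.sum_congr rfl fun x hx => ?_
      rw [(Finset.mem_filter.1 hx).2]
    rw [h, ← Finset.sum_mul, Finset.sum_neg_distrib, ← hq1 a, Real.negMulLog]
  have e2 : Hent p X₂ = ∑ x : α₁ × α₂, (-(P x) * Real.log (q2 x.2)) := by
    rw [show Hent p X₂ = ∑ b : α₂, Real.negMulLog (q2 b) from rfl,
      ← Finset.sum_fiberwise Finset.univ Prod.snd
        (fun x : α₁ × α₂ => -(P x) * Real.log (q2 x.2))]
    refine Finset.sum_congr rfl fun b _ => ?_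
    have h : ∑ x ∈ Finset.univ.filter (fun x : α₁ × α₂ => x.2 = b),
        (-(P x) * Real.log (q2 x.2))
        = ∑ x ∈ Finset.univ.filter (fun x : α₁ × α₂ => x.2 = b),
        (-(P x) * Real.log (q2 b)) := by
      refine Finset.sum_congr rfl fun x hx => ?_
      rw [(Finset.mem_filter.1 hx).2]
    rw [h, ← Finset.sum_mul, Finset.sum_neg_distrib, ← hq2 b, Real.negMulLog]
  have e0 : Hent p X₀ = ∑ x : α₁ × α₂, (-(P x) * Real.log (q0 (F x.1))) := by
    rw [show Hent p X₀ = ∑ z : α₀, Real.negMulLog (q0 z) from rfl,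
      ← Finset.sum_fiberwise Finset.univ (fun x : α₁ × α₂ => F x.1)
        (fun x : α₁ × α₂ => -(P x) * Real.log (q0 (F x.1)))]
    refine Finset.sum_congr rfl fun z _ => ?_
    have h : ∑ x ∈ Finset.univ.filter (fun x : α₁ × α₂ => F x.1 = z),
        (-(P x) * Real.log (q0 (F x.1)))
        = ∑ x ∈ Finset.univ.filter (fun x : α₁ × α₂ => F x.1 = z),
        (-(P x) * Real.log (q0 z)) := by
      refine Finset.sum_congr rfl fun x hx => ?_
      rw [(Finset.mem_filter.1 hx).2]
    rw [h, ← Finset.sum_mul, Finset.sum_neg_distrib, ← hq0Y z, Real.negMulLog]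
  have eY : Hent p Y = ∑ x : α₁ × α₂, Real.negMulLog (P x) := rfl
  -- the comparison distribution Q
  set Q : α₁ × α₂ → ℝ := fun x => q1 x.1 * q2 x.2 / q0 (F x.1) with hQdef
  have hQnn : ∀ x, 0 ≤ Q x := by
    intro x
    rw [hQdef]
    exact div_nonneg
      (mul_nonneg (pOf_nonneg p hp0 X₁ x.1) (pOf_nonneg p hp0 X₂ x.2))
      (pOf_nonneg p hp0 X₀ (F x.1))
  set T : Finset (α₁ × α₂) := Finset.univ.filter (fun x => F x.1 = G x.2) with hTdef
  set supp : Finset (α₁ × α₂) := Finset.univ.filter (fun x => P x ≠ 0) with hsuppdef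
  -- support is inside T
  have hsuppT : supp ⊆ T := by
    intro x hx
    have hPx : P x ≠ 0 := (Finset.mem_filter.1 hx).2
    obtain ⟨ω, hωmem, hωne⟩ := Finset.exists_ne_zero_of_sum_ne_zero hPx
    have hYx : Y ω = x := (Finset.mem_filter.1 hωmem).2
    have hFG : F x.1 = G x.2 := by
      rw [← hYx]
      show F (X₁ ω) = G (X₂ ω)
      rw [← hF ω, ← hG ω]
    exact Finset.mem_filter.2 ⟨Finset.mem_univ _, hFG⟩
  -- sum of Q over T equals 1
  have hQT : ∑ x ∈ T, Q x = 1 := by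
    rw [← Finset.sum_fiberwise T (fun x : α₁ × α₂ => F x.1) Q]
    have hfib : ∀ z : α₀, ∑ x ∈ T.filter (fun x => F x.1 = z), Q x = q0 z := by
      intro z
      have hset : T.filter (fun x => F x.1 = z)
          = (Finset.univ.filter (fun a => F a = z)) ×ˢ
            (Finset.univ.filter (fun b => G b = z)) := by
        rw [hTdef, Finset.filter_filter, ← Finset.univ_product_univ,
          ← Finset.filter_product]
        refine Finset.filter_congr fun x _ => ?_
        constructor
        · rintro ⟨h1, h2⟩; exact ⟨h2, h2 ▸ h1.symm⟩
        · rintro ⟨h1, h2⟩; exact ⟨h1.trans h2.symm, h1⟩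
      rw [hset, Finset.sum_product]
      have hrow : ∀ a ∈ Finset.univ.filter (fun a => F a = z),
          ∑ b ∈ Finset.univ.filter (fun b => G b = z), Q (a, b)
            = q1 a * (q0 z) / q0 z := by
        intro a ha
        have hFa : F a = z := (Finset.mem_filter.1 ha).2
        calc ∑ b ∈ Finset.univ.filter (fun b => G b = z), Q (a, b)
            = ∑ b ∈ Finset.univ.filter (fun b => G b = z), q1 a * q2 b / q0 z := by
              refine Finset.sum_congr rfl fun b _ => ?_
              simp only [hQdef]
              rw [hFa]
          _ = q1 a * (∑ b ∈ Finset.univ.filter (fun b => G b = z), q2 b) / q0 z := by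
              rw [Finset.mul_sum, Finset.sum_div]
          _ = q1 a * (q0 z) / q0 z := by rw [← hq0G z]
      rw [Finset.sum_congr rfl hrow, ← Finset.sum_div, ← Finset.sum_mul, ← hq0F z]
      by_cases h0 : q0 z = 0
      · simp [h0]
      · field_simp
    rw [Finset.sum_congr rfl fun z _ => hfib z, hq0def, sum_pOf, hp1]
  -- the summand g
  set g : α₁ × α₂ → ℝ := fun x => Real.negMulLog (P x)
      + (P x * Real.log (q1 x.1) + P x * Real.log (q2 x.2)
          - P x * Real.log (q0 (F x.1))) with hgdef
  -- pointwise Gibbs bound on the support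
  have hgibbs : ∀ x ∈ supp, g x ≤ Q x - P x := by
    intro x hx
    have hPx : 0 < P x := lt_of_le_of_ne (hPnn x) (Ne.symm (Finset.mem_filter.1 hx).2)
    have hxq1 : P x ≤ q1 x.1 := by
      rw [hq1 x.1]
      exact Finset.single_le_sum (fun y _ => hPnn y)
        (Finset.mem_filter.2 ⟨Finset.mem_univ _, rfl⟩)
    have hxq2 : P x ≤ q2 x.2 := by
      rw [hq2 x.2]
      exact Finset.single_le_sum (fun y _ => hPnn y)
        (Finset.mem_filter.2 ⟨Finset.mem_univ _, rfl⟩)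
    have hxq0 : P x ≤ q0 (F x.1) := by
      rw [hq0Y (F x.1)]
      exact Finset.single_le_sum (fun y _ => hPnn y)
        (Finset.mem_filter.2 ⟨Finset.mem_univ _, rfl⟩)
    have h1p : 0 < q1 x.1 := lt_of_lt_of_le hPx hxq1
    have h2p : 0 < q2 x.2 := lt_of_lt_of_le hPx hxq2
    have h0p : 0 < q0 (F x.1) := lt_of_lt_of_le hPx hxq0
    have hQp : 0 < Q x := by
      rw [hQdef]
      exact div_pos (mul_pos h1p h2p) h0p
    have hlogQ : Real.log (Q x)
        = Real.log (q1 x.1) + Real.log (q2 x.2) - Real.log (q0 (F x.1)) := by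
      rw [hQdef]
      simp only []
      rw [Real.log_div (mul_pos h1p h2p).ne' h0p.ne', Real.log_mul h1p.ne' h2p.ne']
    have hkey : P x * Real.log (Q x / P x) ≤ P x * (Q x / P x - 1) :=
      mul_le_mul_of_nonneg_left
        (Real.log_le_sub_one_of_pos (div_pos hQp hPx)) hPx.le
    rw [Real.log_div hQp.ne' hPx.ne', hlogQ] at hkey
    have hrhs : P x * (Q x / P x - 1) = Q x - P x := by field_simp
    rw [hrhs] at hkey
    simp only [hgdef, Real.negMulLog_def]
    ring_nf at hkey ⊢
    linarith [hkey]
  -- summing up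
  have hsum_g : ∑ x : α₁ × α₂, g x = ∑ x ∈ supp, g x := by
    refine (Finset.sum_subset (Finset.filter_subset _ _) ?_).symm
    intro x _ hx
    have hzero : P x = 0 := by
      by_contra h
      exact hx (Finset.mem_filter.2 ⟨Finset.mem_univ _, h⟩)
    simp [hgdef, hzero]
  have hPsupp : ∑ x ∈ supp, P x = 1 := by
    rw [← hPsum]
    refine Finset.sum_subset (Finset.filter_subset _ _) ?_
    intro x _ hx
    by_contra h
    exact hx (Finset.mem_filter.2 ⟨Finset.mem_univ _, h⟩)
  have hQsupp : ∑ x ∈ supp, Q x ≤ 1 := by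
    rw [← hQT]
    exact Finset.sum_le_sum_of_subset_of_nonneg hsuppT fun x _ _ => hQnn x
  have hg_le : ∑ x : α₁ × α₂, g x ≤ 0 := by
    rw [hsum_g]
    calc ∑ x ∈ supp, g x ≤ ∑ x ∈ supp, (Q x - P x) := Finset.sum_le_sum hgibbs
      _ = (∑ x ∈ supp, Q x) - ∑ x ∈ supp, P x := Finset.sum_sub_distrib _ _
      _ ≤ 1 - 1 := by rw [hPsupp]; linarith [hQsupp]
      _ = 0 := by ring
  -- conclude step 2
  have h2 : Hent p Y + Hent p X₀ ≤ Hent p X₁ + Hent p X₂ := by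
    have hexpand : ∑ x : α₁ × α₂, g x
        = (∑ x : α₁ × α₂, Real.negMulLog (P x))
          + ((∑ x : α₁ × α₂, (P x * Real.log (q1 x.1)))
            + (∑ x : α₁ × α₂, (P x * Real.log (q2 x.2)))
            - (∑ x : α₁ × α₂, (P x * Real.log (q0 (F x.1))))) := by
      simp only [hgdef]
      rw [Finset.sum_add_distrib, Finset.sum_sub_distrib, Finset.sum_add_distrib]
    have hneg1 : ∑ x : α₁ × α₂, (-(P x) * Real.log (q1 x.1))
        = -∑ x : α₁ × α₂, (P x * Real.log (q1 x.1)) := by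
      simp [neg_mul, Finset.sum_neg_distrib]
    have hneg2 : ∑ x : α₁ × α₂, (-(P x) * Real.log (q2 x.2))
        = -∑ x : α₁ × α₂, (P x * Real.log (q2 x.2)) := by
      simp [neg_mul, Finset.sum_neg_distrib]
    have hneg0 : ∑ x : α₁ × α₂, (-(P x) * Real.log (q0 (F x.1)))
        = -∑ x : α₁ × α₂, (P x * Real.log (q0 (F x.1))) := by
      simp [neg_mul, Finset.sum_neg_distrib]
    rw [eY, e0, e1, e2, hneg0, hneg1, hneg2]
    rw [hexpand] at hg_le
    linarith
  linarith
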